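/- arXiv:1502.07823 — 3 statements merged into one kernel-verified Lean document; each statement's English description precedes it below -/
import Mathlib

section
/- Let μ₁ and μ₂ be two matchings, each of which is the men-optimal stable matching for a reported profile in which manipulators in L use truncation manipulations keeping their women-optimal stable partners, and both stable under the true profile. Then μ₁ ∧ μ₂ (each woman gets her more preferred of the two partners) is also achievable: it is the men-optimal stable matching of the profile obtained by giving each manipulator the shorter of her two truncated lists. -/
open List

/-- A stable-matching instance: each agent has a strict preference order
(a duplicate-free list, earlier = more preferred) over a subset of the other side. -/
structure SMInstance (M W : Type*) where
  mpref : M → List W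
  wpref : W → List M
  mnodup : ∀ m, (mpref m).Nodup
  wnodup : ∀ w, (wpref w).Nodup

/-- A matching: a pairing of men and women (agents may be unmatched),
involutive on matched pairs. -/
structure Matching (M W : Type*) where
  μm : M → Option W
  μw : W → Option M
  consistent : ∀ m w, μm m = some w ↔ μw w = some m

section Defs

variable {M W : Type*} [DecidableEq M] [DecidableEq W]

/-- Man `m` strictly prefers woman `w` to the (possibly empty) assignment `o`. -/
def SMInstance.mPref (I : SMInstance M W) (m : M) (w : W) : Option W → Prop
  | some w' => w ∈ I.mpref m ∧ (w' ∉ I.mpref m ∨ (I.mpref m).idxOf w < (I.mpref m).idxOf w')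
  | none => w ∈ I.mpref m

/-- Woman `w` strictly prefers man `m` to the (possibly empty) assignment `o`. -/
def SMInstance.wPref (I : SMInstance M W) (w : W) (m : M) : Option M → Prop
  | some m' => m ∈ I.wpref w ∧ (m' ∉ I.wpref w ∨ (I.wpref w).idxOf m < (I.wpref w).idxOf m')
  | none => m ∈ I.wpref w

/-- Man `m` weakly prefers assignment `o₁` to assignment `o₂`. -/
def SMInstance.mWeak (I : SMInstance M W) (m : M) (o₁ o₂ : Option W) : Prop :=
  o₁ = o₂ ∨ ∃ w, o₁ = some w ∧ I.mPref m w o₂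

/-- Woman `w` weakly prefers assignment `o₁` to assignment `o₂`. -/
def SMInstance.wWeak (I : SMInstance M W) (w : W) (o₁ o₂ : Option M) : Prop :=
  o₁ = o₂ ∨ ∃ m, o₁ = some m ∧ I.wPref w m o₂

def IndivRational (I : SMInstance M W) (μ : Matching M W) : Prop :=
  ∀ m w, μ.μm m = some w → w ∈ I.mpref m ∧ m ∈ I.wpref w

def BlockingPair (I : SMInstance M W) (μ : Matching M W) (m : M) (w : W) : Prop :=
  μ.μm m ≠ some w ∧ I.mPref m w (μ.μm m) ∧ I.wPref w m (μ.μw w)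

def IsStable (I : SMInstance M W) (μ : Matching M W) : Prop :=
  IndivRational I μ ∧ ∀ m w, ¬ BlockingPair I μ m w

/-- The men-optimal stable matching (= output of men-proposing Gale–Shapley). -/
def IsMenOptimal (I : SMInstance M W) (μ : Matching M W) : Prop :=
  IsStable I μ ∧ ∀ μ', IsStable I μ' → ∀ m, I.mWeak m (μ.μm m) (μ'.μm m)

/-- The women-optimal stable matching. -/
def IsWomenOptimal (I : SMInstance M W) (μ : Matching M W) : Prop :=
  IsStable I μ ∧ ∀ μ', IsStable I μ' → ∀ w, I.wWeak w (μ.μw w) (μ'.μw w)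

/-- `I'` arises from `I` by arbitrary misreports of the women in `L`
(all men and all women outside `L` are truthful). -/
def GeneralManip (I I' : SMInstance M W) (L : Set W) : Prop :=
  I'.mpref = I.mpref ∧ ∀ w ∉ L, I'.wpref w = I.wpref w

/-- `I'` arises from `I` by truncation (prefix) misreports of the women in `L`. -/
def TruncManip (I I' : SMInstance M W) (L : Set W) : Prop :=
  GeneralManip I I' L ∧ ∀ w ∈ L, (I'.wpref w) <+: (I.wpref w)

/-- `I'` arises from `I` by permutation misreports of the women in `L`. -/
def PermManip (I I' : SMInstance M W) (L : Set W) : Prop :=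
  GeneralManip I I' L ∧ ∀ w ∈ L, (I'.wpref w).Perm (I.wpref w)

/-- Woman `w` is strictly better off in `μ₁` than in `μ₂` (true preferences). -/
def wStrictBetter (I : SMInstance M W) (w : W) (μ₁ μ₂ : Matching M W) : Prop :=
  ∃ m, μ₁.μw w = some m ∧ I.wPref w m (μ₂.μw w)

/-- The set `δ(w)` of suitors of `w` at matching `μ`: the men who prefer `w`
to their own partner in `μ`. -/
def suitorSet (I : SMInstance M W) (μ : Matching M W) (w : W) : Set M :=
  {m | I.mPref m w (μ.μm m)}

/-- The suitor graph of Kobayashi–Matsui, on vertices `M ⊕ W ⊕ {s}`. -/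
inductive SuitorEdge (I : SMInstance M W) (L : Set W) (μ : Matching M W) :
    M ⊕ W ⊕ Unit → M ⊕ W ⊕ Unit → Prop
  | partner_wm (w : W) (m : M) : μ.μw w = some m →
      SuitorEdge I L μ (Sum.inr (Sum.inl w)) (Sum.inl m)
  | partner_mw (w : W) (m : M) : μ.μw w = some m →
      SuitorEdge I L μ (Sum.inl m) (Sum.inr (Sum.inl w))
  | suitor_manip (w : W) (m : M) : w ∈ L → m ∈ suitorSet I μ w →
      SuitorEdge I L μ (Sum.inl m) (Sum.inr (Sum.inl w))
  | suitor_honest (w : W) (m : M) : w ∉ L → m ∈ suitorSet I μ w →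
      (∀ m' ∈ suitorSet I μ w, m' ≠ m → (I.wpref w).idxOf m < (I.wpref w).idxOf m') →
      SuitorEdge I L μ (Sum.inl m) (Sum.inr (Sum.inl w))
  | fromSource (w : W) : suitorSet I μ w = ∅ →
      SuitorEdge I L μ (Sum.inr (Sum.inr ())) (Sum.inr (Sum.inl w))

/-- Reachability in the suitor graph. -/
abbrev SReach (I : SMInstance M W) (L : Set W) (μ : Matching M W) :
    (M ⊕ W ⊕ Unit) → (M ⊕ W ⊕ Unit) → Prop :=
  Relation.ReflTransGen (SuitorEdge I L μ)

/-- A reduced table (shortlists) for instance `I`: sublists of the true lists,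
with mutual membership, where each man is engaged to the head of his reduced list,
each woman to the last man of hers, and every removed man is worse for the woman
than her current partner. -/
structure ReducedTable (I : SMInstance M W) where
  rm : M → List W
  rw : W → List M
  rmSub : ∀ m, (rm m).Sublist (I.mpref m)
  rwSub : ∀ w, (rw w).Sublist (I.wpref w)
  mem_iff : ∀ m w, w ∈ rm m ↔ m ∈ rw w
  engaged : ∀ m w, (rm m).head? = some w ↔ (rw w).getLast? = some m
  removed_worse : ∀ m w p, m ∈ I.wpref w → m ∉ rw w → (rw w).getLast? = some p →
      (I.wpref w).idxOf p < (I.wpref w).idxOf m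

/-- A rotation: a cyclic sequence of (distinct) men `m₀,…,m_{r-1}`
together with their current partners `w₀,…,w_{r-1}`. -/
structure Rot (M W : Type*) where
  r : ℕ
  hr : 2 ≤ r
  ms : Fin r → M
  ws : Fin r → W
  inj : Function.Injective ms

/-- Cyclic successor of an index of a rotation. -/
def Rot.nxt (R : Rot M W) (i : Fin R.r) : Fin R.r :=
  ⟨((i : ℕ) + 1) % R.r, Nat.mod_lt _ (by have := R.hr; omega)⟩

/-- The reduced list of woman `w` determined by the stable matching `μ`:
the men weakly preferred to her current partner. -/
def reducedListW (I : SMInstance M W) (μ : Matching M W) (w : W) : List M :=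
  match μ.μw w with
  | some p => (I.wpref w).filter (fun m => decide ((I.wpref w).idxOf m ≤ (I.wpref w).idxOf p))
  | none => []

/-- The reduced list of man `m` determined by the stable matching `μ`. -/
def reducedListM (I : SMInstance M W) (μ : Matching M W) (m : M) : List W :=
  (I.mpref m).filter (fun w => decide (m ∈ reducedListW I μ w))

/-- The rotation `R` is exposed in (the reduced table of) the matching `μ`:
`w_i` is first and `w_{i+1}` second on `m_i`'s reduced list. -/
def Exposed (I : SMInstance M W) (μ : Matching M W) (R : Rot M W) : Prop :=
  ∀ i, (reducedListM I μ (R.ms i)).head? = some (R.ws i) ∧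
       (reducedListM I μ (R.ms i))[1]? = some (R.ws (R.nxt i))

/-- `μ'` is the matching obtained from `μ` by eliminating the rotation `R`:
each `m_i` is now matched with `w_{i+1}`, everyone else is unchanged. -/
def ElimStep (R : Rot M W) (μ μ' : Matching M W) : Prop :=
  (∀ i, μ'.μm (R.ms i) = some (R.ws (R.nxt i))) ∧
  ∀ m, (∀ i, m ≠ R.ms i) → μ'.μm m = μ.μm m

/-- `ElimSeq I μ S μ'`: the matching `μ'` is obtained from `μ` by successively
eliminating the (exposed-at-the-time) rotations of the set `S`. -/
inductive ElimSeq (I : SMInstance M W) : Matching M W → Set (Rot M W) → Matching M W → Prop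
  | refl (μ : Matching M W) : ElimSeq I μ ∅ μ
  | step {μ μ' μ'' : Matching M W} {R : Rot M W} {S : Set (Rot M W)} :
      Exposed I μ R → ElimStep R μ μ' → ElimSeq I μ' S μ'' → ElimSeq I μ (insert R S) μ''

/-- The rotation `R` moves man `m` from woman `w` to woman `w'`. -/
def Moves (R : Rot M W) (m : M) (w w' : W) : Prop :=
  ∃ i, R.ms i = m ∧ R.ws i = w ∧ R.ws (R.nxt i) = w'

/-- `R₁` explicitly precedes `R₂`: they share a man `m` such that `R₁` moves `m`
to some woman `w` and `R₂` moves `m` away from `w`. -/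
def ExplicitPrec (R₁ R₂ : Rot M W) : Prop :=
  ∃ m w w₁ w₂, Moves R₁ m w₁ w ∧ Moves R₂ m w w₂

/-- The precedence relation `≺`: transitive closure of explicit precedence. -/
def Prec (R₁ R₂ : Rot M W) : Prop :=
  Relation.TransGen ExplicitPrec R₁ R₂

/-- `R` is a rotation of the instance `I`: it is exposed at some matching
obtained from the men-optimal matching by eliminating rotations. -/
def IsRotOf (I : SMInstance M W) (R : Rot M W) : Prop :=
  ∃ μ0 S μ', IsMenOptimal I μ0 ∧ ElimSeq I μ0 S μ' ∧ Exposed I μ' R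

/-- A closed (downward-closed under `≺`) set of rotations of the instance `I`. -/
def IsClosedSet (I : SMInstance M W) (𝓡 : Set (Rot M W)) : Prop :=
  (∀ R ∈ 𝓡, IsRotOf I R) ∧ ∀ R ∈ 𝓡, ∀ R', IsRotOf I R' → Prec R' R → R' ∈ 𝓡

/-- The closed set `𝓡` can be eliminated: the matching obtained by eliminating it
is stable w.r.t. the true profile and is the men-optimal stable matching of some
profile in which only the women of `L` misreport. -/
def CanEliminate (I : SMInstance M W) (L : Set W) (𝓡 : Set (Rot M W)) : Prop :=
  ∃ μ0 μ', IsMenOptimal I μ0 ∧ ElimSeq I μ0 𝓡 μ' ∧ IsStable I μ' ∧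
    ∃ I', GeneralManip I I' L ∧ IsMenOptimal I' μ'

/-- `R` is a maximal rotation of the set `𝓡`. -/
def MaxRot (𝓡 : Set (Rot M W)) (R : Rot M W) : Prop :=
  R ∈ 𝓡 ∧ ∀ R' ∈ 𝓡, ¬ Prec R R'

/-- Whether man `m` proposes to woman `w` in the men-proposing Gale–Shapley run
whose outcome is `μ` (he proposes to every woman he weakly prefers to his final partner). -/
def proposedToB (I : SMInstance M W) (μ : Matching M W) (m : M) (w : W) : Bool :=
  decide (w ∈ I.mpref m) &&
    (match μ.μm m with
     | none => true
     | some w' => decide ((I.mpref m).idxOf w ≤ (I.mpref m).idxOf w'))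

/-- The proposal list `Pro(w)`: all men who proposed to `w`, ordered as in her stated list. -/
def proposals (I : SMInstance M W) (μ : Matching M W) (w : W) : List M :=
  (I.wpref w).filter (fun m => proposedToB I μ m w)

/-- `μ` is feasible for the permutation-manipulation game of coalition `L`. -/
def FeasibleM (I : SMInstance M W) (L : Set W) (μ : Matching M W) : Prop :=
  IsStable I μ ∧ ∃ I', PermManip I I' L ∧ IsMenOptimal I' μ

/-- `μ` is Pareto-optimal among feasible matchings (for the women). -/
def ParetoOptimal (I : SMInstance M W) (L : Set W) (μ : Matching M W) : Prop :=
  FeasibleM I L μ ∧ ¬∃ μ', FeasibleM I L μ' ∧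
    (∀ w, I.wWeak w (μ'.μw w) (μ.μw w)) ∧ (∃ w, wStrictBetter I w μ' μ)

/-- The reported profile `I'` with induced matching `μ` is a super-strong Nash
equilibrium of the permutation-manipulation game under the feasibility assumption. -/
def SuperStrongNE (I : SMInstance M W) (L : Set W) (I' : SMInstance M W)
    (μ : Matching M W) : Prop :=
  PermManip I I' L ∧ IsMenOptimal I' μ ∧ IsStable I μ ∧
  ∀ (Ls : Set W), Ls ⊆ L → ∀ I'' μ'',
    PermManip I I'' L → (∀ w ∉ Ls, I''.wpref w = I'.wpref w) →
    IsMenOptimal I'' μ'' → IsStable I μ'' →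
    ¬((∀ l ∈ Ls, I.wWeak l (μ''.μw l) (μ.μw l)) ∧ ∃ l ∈ Ls, wStrictBetter I l μ'' μ)

end Defs

section AuxIdx

variable {α : Type*} [DecidableEq α]

theorem idx_prefix {l₁ l₂ : List α} (h : l₁ <+: l₂) {a : α} (ha : a ∈ l₁) :
    l₂.idxOf a = l₁.idxOf a := by
  obtain ⟨t, rfl⟩ := h
  exact List.idxOf_append_of_mem ha

theorem idx_lt_of_not_mem {l₁ l₂ : List α} (h : l₁ <+: l₂) {a b : α} (ha : a ∈ l₁)
    (hb : b ∉ l₁) : l₂.idxOf a < l₂.idxOf b := by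
  obtain ⟨t, rfl⟩ := h
  rw [List.idxOf_append_of_mem ha, List.idxOf_append_of_notMem hb]
  calc l₁.idxOf a < l₁.length := List.idxOf_lt_length_iff.2 ha
    _ ≤ l₁.length + t.idxOf b := Nat.le_add_right _ _

theorem mem_of_idx_lt {l₁ l₂ : List α} (h : l₁ <+: l₂) {a b : α} (ha : a ∈ l₁)
    (hbm : b ∈ l₂) (hlt : l₂.idxOf b < l₂.idxOf a) : b ∈ l₁ := by
  by_contra hb
  exact absurd (idx_lt_of_not_mem h ha hb) (by omega)

theorem idx_ne {l : List α} {a b : α} (ha : a ∈ l) (hb : b ∈ l) (hne : a ≠ b) :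
    l.idxOf a ≠ l.idxOf b := fun h => hne ((List.idxOf_inj ha).1 h)

/-- better (smaller index) of two optional entries; `none` is worst. -/
def pickB (l : List α) : Option α → Option α → Option α
  | none, o => o
  | some a, none => some a
  | some a, some b => if l.idxOf a ≤ l.idxOf b then some a else some b

/-- worse (larger index) of two optional entries; `none` dominates to `none`. -/
def pickW (l : List α) : Option α → Option α → Option α
  | none, _ => none
  | some _, none => none
  | some a, some b => if l.idxOf a ≤ l.idxOf b then some b else some a

theorem pickB_eq_or (l : List α) (o₁ o₂ : Option α) :
    pickB l o₁ o₂ = o₁ ∨ pickB l o₁ o₂ = o₂ := by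
  rcases o₁ with _ | a <;> rcases o₂ with _ | b
  · exact Or.inl rfl
  · exact Or.inr rfl
  · exact Or.inl rfl
  · simp only [pickB]; split_ifs <;> simp

theorem pickW_eq_or (l : List α) (o₁ o₂ : Option α) :
    pickW l o₁ o₂ = o₁ ∨ pickW l o₁ o₂ = o₂ := by
  rcases o₁ with _ | a <;> rcases o₂ with _ | b
  · exact Or.inl rfl
  · exact Or.inl rfl
  · exact Or.inr rfl
  · simp only [pickW]; split_ifs <;> simp

theorem pickW_eq_none (l : List α) {o₁ o₂ : Option α} (h : pickW l o₁ o₂ = none) :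
    o₁ = none ∨ o₂ = none := by
  rcases o₁ with _ | a <;> rcases o₂ with _ | b
  · exact Or.inl rfl
  · exact Or.inl rfl
  · exact Or.inr rfl
  · simp only [pickW] at h; split_ifs at h <;> simp_all

theorem pickB_eq_none (l : List α) {o₁ o₂ : Option α} (h : pickB l o₁ o₂ = none) :
    o₁ = none ∧ o₂ = none := by
  rcases o₁ with _ | a <;> rcases o₂ with _ | b
  · exact ⟨rfl, rfl⟩
  · exact absurd h (by simp [pickB])
  · exact absurd h (by simp [pickB])
  · simp only [pickB] at h; split_ifs at h <;> simp_all

theorem pickW_some (l : List α) {o₁ o₂ : Option α} {c : α} (h : pickW l o₁ o₂ = some c) :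
    ∃ a b, o₁ = some a ∧ o₂ = some b ∧ l.idxOf a ≤ l.idxOf c ∧ l.idxOf b ≤ l.idxOf c := by
  rcases o₁ with _ | a <;> rcases o₂ with _ | b <;>
    [exact absurd h (by simp [pickW]); exact absurd h (by simp [pickW]);
     exact absurd h (by simp [pickW]); skip]
  simp only [pickW] at h
  refine ⟨a, b, rfl, rfl, ?_⟩
  split_ifs at h with hab <;> rw [Option.some_inj] at h <;> subst h <;> omega

theorem pickB_some (l : List α) {o₁ o₂ : Option α} {c : α} (h : pickB l o₁ o₂ = some c) :
    (o₁ = some c ∨ o₂ = some c) ∧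
      (∀ a, o₁ = some a → l.idxOf c ≤ l.idxOf a) ∧
      (∀ b, o₂ = some b → l.idxOf c ≤ l.idxOf b) := by
  rcases o₁ with _ | a <;> rcases o₂ with _ | b
  · exact absurd h (by simp [pickB])
  · simp only [pickB] at h
    exact ⟨Or.inr h, fun a ha => by simp at ha, fun b hb => by rw [h] at hb; simp_all⟩
  · simp only [pickB] at h
    exact ⟨Or.inl h, fun x hx => by rw [h] at hx; simp_all, fun b hb => by simp at hb⟩
  · simp only [pickB] at h
    split_ifs at h with hab <;> rw [Option.some_inj] at h <;> subst h <;>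
      exact ⟨by simp, fun x hx => by injection hx with hx; subst hx; omega,
        fun y hy => by injection hy with hy; subst hy; omega⟩

theorem pickB_fst_lt (l : List α) {o₁ : Option α} {b c : α} (h : pickB l o₁ (some b) = some c)
    (hne : c ≠ b) (hcm : c ∈ l) (hbm : b ∈ l) : o₁ = some c ∧ l.idxOf c < l.idxOf b := by
  rcases o₁ with _ | a
  · simp only [pickB] at h; rw [Option.some_inj] at h; exact absurd h.symm hne
  · simp only [pickB] at h
    split_ifs at h with hab <;> rw [Option.some_inj] at h <;> subst h
    · exact ⟨rfl, lt_of_le_of_ne hab (idx_ne hcm hbm hne)⟩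
    · exact absurd rfl hne

theorem pickB_snd_lt (l : List α) {o₂ : Option α} {a c : α} (h : pickB l (some a) o₂ = some c)
    (hne : c ≠ a) : o₂ = some c ∧ l.idxOf c < l.idxOf a := by
  rcases o₂ with _ | b
  · simp only [pickB] at h; rw [Option.some_inj] at h; exact absurd h.symm hne
  · simp only [pickB] at h
    split_ifs at h with hab <;> rw [Option.some_inj] at h <;> subst h
    · exact absurd rfl hne
    · exact ⟨rfl, by omega⟩

theorem pickB_comm (l : List α) {o₁ o₂ : Option α}
    (h : ∀ a b, o₁ = some a → o₂ = some b → a ∈ l ∧ b ∈ l) :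
    pickB l o₁ o₂ = pickB l o₂ o₁ := by
  rcases o₁ with _ | a <;> rcases o₂ with _ | b <;> simp only [pickB]
  obtain ⟨ha, hb⟩ := h a b rfl rfl
  rcases eq_or_ne a b with rfl | hne
  · simp
  · have := idx_ne ha hb hne
    split_ifs <;> first | rfl | omega

end AuxIdx
section ConwayCore

variable {M W : Type*} [DecidableEq M] [DecidableEq W]

theorem mPref_none_iff (I : SMInstance M W) (m : M) (w : W) :
    I.mPref m w none ↔ w ∈ I.mpref m := Iff.rfl

theorem mPref_some_iff (I : SMInstance M W) (m : M) (w w' : W) :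
    I.mPref m w (some w') ↔ w ∈ I.mpref m ∧
      (w' ∉ I.mpref m ∨ (I.mpref m).idxOf w < (I.mpref m).idxOf w') := Iff.rfl

theorem wPref_none_iff (I : SMInstance M W) (w : W) (m : M) :
    I.wPref w m none ↔ m ∈ I.wpref w := Iff.rfl

theorem wPref_some_iff (I : SMInstance M W) (w : W) (m m' : M) :
    I.wPref w m (some m') ↔ m ∈ I.wpref w ∧
      (m' ∉ I.wpref w ∨ (I.wpref w).idxOf m < (I.wpref w).idxOf m') := Iff.rfl

theorem mPref_mem {I : SMInstance M W} {m : M} {w : W} {o : Option W}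
    (h : I.mPref m w o) : w ∈ I.mpref m := by
  cases o with
  | none => exact h
  | some _ => exact h.1

theorem wPref_mem {I : SMInstance M W} {w : W} {m : M} {o : Option M}
    (h : I.wPref w m o) : m ∈ I.wpref w := by
  cases o with
  | none => exact h
  | some _ => exact h.1

theorem mPref_irrefl {I : SMInstance M W} {m : M} {w : W} (hw : w ∈ I.mpref m) :
    ¬ I.mPref m w (some w) := by
  rintro ⟨-, h | h⟩
  · exact h hw
  · exact absurd h (lt_irrefl _)

theorem wPref_irrefl {I : SMInstance M W} {w : W} {m : M} (hm : m ∈ I.wpref w) :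
    ¬ I.wPref w m (some m) := by
  rintro ⟨-, h | h⟩
  · exact h hm
  · exact absurd h (lt_irrefl _)

/-- If `m`–`w` is a `μa`-pair and `m` strictly prefers `w` to his `μb`-assignment,
then `w` is matched in `μb` to somebody she strictly prefers to `m`. -/
theorem pattern_m {J : SMInstance M W} {μa μb : Matching M W}
    (ha : IsStable J μa) (hb : IsStable J μb) {m : M} {w : W}
    (hm : μa.μm m = some w) (hp : J.mPref m w (μb.μm m)) :
    ∃ m', μb.μw w = some m' ∧ m' ∈ J.wpref w ∧ m' ≠ m ∧
      (J.wpref w).idxOf m' < (J.wpref w).idxOf m := by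
  obtain ⟨hwm, hmw⟩ := ha.1 m w hm
  have hne : μb.μm m ≠ some w := by
    intro h; rw [h] at hp; exact mPref_irrefl hwm hp
  cases hbw : μb.μw w with
  | none =>
    exact absurd ⟨hne, hp, by rw [hbw]; exact hmw⟩ (hb.2 m w)
  | some m' =>
    have hbm' : μb.μm m' = some w := (μb.consistent m' w).2 hbw
    obtain ⟨-, hm'w⟩ := hb.1 m' w hbm'
    have hne' : m' ≠ m := by rintro rfl; exact hne hbm'
    refine ⟨m', rfl, hm'w, hne', ?_⟩
    by_contra hlt
    have hidx : (J.wpref w).idxOf m < (J.wpref w).idxOf m' :=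
      lt_of_le_of_ne (not_lt.1 hlt) (idx_ne hmw hm'w (Ne.symm hne'))
    exact hb.2 m w ⟨hne, hp, by rw [hbw]; exact ⟨hmw, Or.inr hidx⟩⟩

/-- Mirror of `pattern_m`. -/
theorem pattern_w {J : SMInstance M W} {μa μb : Matching M W}
    (ha : IsStable J μa) (hb : IsStable J μb) {w : W} {m : M}
    (hm : μa.μw w = some m) (hp : J.wPref w m (μb.μw w)) :
    ∃ w', μb.μm m = some w' ∧ w' ∈ J.mpref m ∧ w' ≠ w ∧
      (J.mpref m).idxOf w' < (J.mpref m).idxOf w := by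
  have hma : μa.μm m = some w := (μa.consistent m w).2 hm
  obtain ⟨hwm, hmw⟩ := ha.1 m w hma
  have hne : μb.μw w ≠ some m := by
    intro h; rw [h] at hp; exact wPref_irrefl hmw hp
  have hne2 : μb.μm m ≠ some w := fun h => hne ((μb.consistent m w).1 h)
  cases hbm : μb.μm m with
  | none =>
    exact absurd ⟨hne2, by rw [hbm]; exact hwm, hp⟩ (hb.2 m w)
  | some w' =>
    obtain ⟨hw'm, -⟩ := hb.1 m w' hbm
    have hne' : w' ≠ w := by rintro rfl; exact hne2 hbm
    refine ⟨w', rfl, hw'm, hne', ?_⟩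
    by_contra hlt
    have hidx : (J.mpref m).idxOf w < (J.mpref m).idxOf w' :=
      lt_of_le_of_ne (not_lt.1 hlt) (idx_ne hwm hw'm (Ne.symm hne'))
    exact hb.2 m w ⟨hne2, by rw [hbm]; exact ⟨hwm, Or.inr hidx⟩, hp⟩

variable [Fintype M] [Fintype W]

/-- Gale–Sotomayor counting: people strictly preferring one stable matching are
matched in the other, to a partner of the corresponding kind. -/
theorem counting {J : SMInstance M W} {μa μb : Matching M W}
    (ha : IsStable J μa) (hb : IsStable J μb) :
    (∀ m, (∃ w, μa.μm m = some w ∧ J.mPref m w (μb.μm m)) →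
       ∃ w, μb.μm m = some w ∧ J.wPref w m (μa.μw w)) ∧
    (∀ w, (∃ m, μb.μw w = some m ∧ J.wPref w m (μa.μw w)) →
       ∃ m, μa.μm m = some w ∧ J.mPref m w (μb.μm m)) := by
  classical
  set A : Finset M :=
    Finset.univ.filter (fun m => ∃ w, μa.μm m = some w ∧ J.mPref m w (μb.μm m)) with hA
  set B : Finset W :=
    Finset.univ.filter (fun w => ∃ m, μb.μw w = some m ∧ J.wPref w m (μa.μw w)) with hB
  have hAmem : ∀ m, m ∈ A ↔ ∃ w, μa.μm m = some w ∧ J.mPref m w (μb.μm m) := by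
    intro m; simp [hA]
  have hBmem : ∀ w, w ∈ B ↔ ∃ m, μb.μw w = some m ∧ J.wPref w m (μa.μw w) := by
    intro w; simp [hB]
  have hsubA : A.image μa.μm ⊆ B.image some := by
    intro o ho
    obtain ⟨m, hmA, rfl⟩ := Finset.mem_image.1 ho
    obtain ⟨w, hw, hp⟩ := (hAmem m).1 hmA
    obtain ⟨m', hbw, hm'mem, hne, hidx⟩ := pattern_m ha hb hw hp
    have haw : μa.μw w = some m := (μa.consistent m w).1 hw
    refine Finset.mem_image.2 ⟨w, (hBmem w).2 ⟨m', hbw, by rw [haw]; exact ⟨hm'mem, Or.inr hidx⟩⟩, hw.symm ▸ rfl⟩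
  have hsubB : B.image μb.μw ⊆ A.image some := by
    intro o ho
    obtain ⟨w, hwB, rfl⟩ := Finset.mem_image.1 ho
    obtain ⟨m, hm, hp⟩ := (hBmem w).1 hwB
    obtain ⟨w', hbm, hw'mem, hne, hidx⟩ := pattern_w hb ha hm hp
    have hmm : μb.μm m = some w := (μb.consistent m w).2 hm
    refine Finset.mem_image.2 ⟨m, (hAmem m).2 ⟨w', hbm, by rw [hmm]; exact ⟨hw'mem, Or.inr hidx⟩⟩, hm.symm ▸ rfl⟩
  have hinjA : Set.InjOn μa.μm A := by
    intro m₁ h₁ m₂ h₂ he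
    obtain ⟨w₁, hw₁, -⟩ := (hAmem m₁).1 (by simpa using h₁)
    have h2 : μa.μm m₂ = some w₁ := by rw [← he]; exact hw₁
    have e1 := (μa.consistent m₁ w₁).1 hw₁
    have e2 := (μa.consistent m₂ w₁).1 h2
    rw [e1] at e2; exact (Option.some_inj.1 e2)
  have hinjB : Set.InjOn μb.μw B := by
    intro w₁ h₁ w₂ h₂ he
    obtain ⟨m₁, hm₁, -⟩ := (hBmem w₁).1 (by simpa using h₁)
    have h2 : μb.μw w₂ = some m₁ := by rw [← he]; exact hm₁
    have e1 := (μb.consistent m₁ w₁).2 hm₁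
    have e2 := (μb.consistent m₁ w₂).2 h2
    rw [e1] at e2; exact (Option.some_inj.1 e2)
  have cardA : A.card ≤ B.card := by
    calc A.card = (A.image μa.μm).card := (Finset.card_image_of_injOn hinjA).symm
      _ ≤ (B.image some).card := Finset.card_le_card hsubA
      _ = B.card := Finset.card_image_of_injective _ (Option.some_injective W)
  have cardB : B.card ≤ A.card := by
    calc B.card = (B.image μb.μw).card := (Finset.card_image_of_injOn hinjB).symm
      _ ≤ (A.image some).card := Finset.card_le_card hsubB
      _ = A.card := Finset.card_image_of_injective _ (Option.some_injective M)
  have hBA : B.image μb.μw = A.image some := by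
    refine Finset.eq_of_subset_of_card_le hsubB ?_
    rw [Finset.card_image_of_injective _ (Option.some_injective M),
      Finset.card_image_of_injOn hinjB]
    exact cardA
  have hAB : A.image μa.μm = B.image some := by
    refine Finset.eq_of_subset_of_card_le hsubA ?_
    rw [Finset.card_image_of_injective _ (Option.some_injective W),
      Finset.card_image_of_injOn hinjA]
    exact cardB
  constructor
  · intro m hm
    have hmA : m ∈ A := (hAmem m).2 hm
    have : some m ∈ B.image μb.μw := by
      rw [hBA]; exact Finset.mem_image.2 ⟨m, hmA, rfl⟩
    obtain ⟨w, hwB, hww⟩ := Finset.mem_image.1 this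
    obtain ⟨m'', hbw'', hpref⟩ := (hBmem w).1 hwB
    have heq : m'' = m := by rw [hww] at hbw''; exact (Option.some_inj.1 hbw'').symm
    subst heq
    exact ⟨w, (μb.consistent _ w).2 hww, hpref⟩
  · intro w hw
    have hwB : w ∈ B := (hBmem w).2 hw
    have : some w ∈ A.image μa.μm := by
      rw [hAB]; exact Finset.mem_image.2 ⟨w, hwB, rfl⟩
    obtain ⟨m, hmA, hmm⟩ := Finset.mem_image.1 this
    obtain ⟨w'', haw'', hpref⟩ := (hAmem m).1 hmA
    have heq : w'' = w := by rw [hmm] at haw''; exact (Option.some_inj.1 haw'').symm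
    subst heq
    exact ⟨m, haw'', hpref⟩

/-- Rural hospitals, woman side. -/
theorem rh_w {J : SMInstance M W} {μa μb : Matching M W}
    (ha : IsStable J μa) (hb : IsStable J μb) {w : W} {m : M}
    (h : μa.μw w = some m) : ∃ m', μb.μw w = some m' := by
  cases hbw : μb.μw w with
  | some m' => exact ⟨m', rfl⟩
  | none =>
    have hmem : m ∈ J.wpref w := (ha.1 m w ((μa.consistent m w).2 h)).2
    obtain ⟨m', hm', -⟩ := (counting hb ha).2 w ⟨m, h, by rw [hbw]; exact hmem⟩
    exact absurd ((μb.consistent m' w).1 hm') (by rw [hbw]; simp)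

/-- Rural hospitals, man side. -/
theorem rh_m {J : SMInstance M W} {μa μb : Matching M W}
    (ha : IsStable J μa) (hb : IsStable J μb) {m : M} {w : W}
    (h : μa.μm m = some w) : ∃ w', μb.μm m = some w' := by
  cases hbm : μb.μm m with
  | some w' => exact ⟨w', rfl⟩
  | none =>
    have hmem : w ∈ J.mpref m := (ha.1 m w h).1
    obtain ⟨w', hw', -⟩ := (counting ha hb).1 m ⟨w, h, by rw [hbm]; exact hmem⟩
    exact absurd hw' (by rw [hbm]; simp)

end ConwayCore
section MeetJoin

variable {M W : Type*} [DecidableEq M] [DecidableEq W] [Fintype M] [Fintype W]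

/-- Helper for the consistency of the meet. -/
theorem meet_dir1_aux {J : SMInstance M W} {μa μb : Matching M W}
    (ha : IsStable J μa) (hb : IsStable J μb) {m : M} {w₁ w₂ : W}
    (h1 : μa.μm m = some w₁) (h2 : μb.μm m = some w₂)
    (hle : (J.mpref m).idxOf w₁ ≤ (J.mpref m).idxOf w₂) :
    pickB (J.wpref w₂) (μa.μw w₂) (μb.μw w₂) = some m := by
  have hbw : μb.μw w₂ = some m := (μb.consistent m w₂).1 h2
  obtain ⟨hw₁m, hmw₁⟩ := ha.1 m w₁ h1
  obtain ⟨hw₂m, hmw₂⟩ := hb.1 m w₂ h2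
  cases haw : μa.μw w₂ with
  | none => rw [hbw]; rfl
  | some p =>
    rcases eq_or_ne p m with rfl | hpm
    · have heq : w₁ = w₂ := by
        have h3 := (μa.consistent p w₂).2 haw
        rw [h1] at h3; exact Option.some_inj.1 h3
      subst heq
      rw [hbw]; simp [pickB]
    · have hw12 : w₁ ≠ w₂ := by
        rintro rfl
        rw [(μa.consistent m w₁).1 h1] at haw
        exact hpm (Option.some_inj.1 haw).symm
      have hlt : (J.mpref m).idxOf w₁ < (J.mpref m).idxOf w₂ :=
        lt_of_le_of_ne hle (idx_ne hw₁m hw₂m hw12)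
      obtain ⟨w', hw', hpref⟩ := (counting ha hb).1 m
        ⟨w₁, h1, by rw [h2]; exact ⟨hw₁m, Or.inr hlt⟩⟩
      have hww : w' = w₂ := by rw [h2] at hw'; exact (Option.some_inj.1 hw').symm
      subst hww
      rw [haw] at hpref
      have hpmem : p ∈ J.wpref w' := (ha.1 p w' ((μa.consistent p w').2 haw)).2
      have hidx : (J.wpref w').idxOf m < (J.wpref w').idxOf p := by
        rcases hpref.2 with h | h
        · exact absurd hpmem h
        · exact h
      rw [hbw]
      simp only [pickB]
      rw [if_neg (by omega)]

/-- The meet (women's pointwise better choice) of two stable matchings is a matching. -/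
theorem meet_consistent {J : SMInstance M W} {μa μb : Matching M W}
    (ha : IsStable J μa) (hb : IsStable J μb) (m : M) (w : W) :
    pickW (J.mpref m) (μa.μm m) (μb.μm m) = some w ↔
      pickB (J.wpref w) (μa.μw w) (μb.μw w) = some m := by
  constructor
  · intro h
    obtain ⟨w₁, w₂, h1, h2, -, -⟩ := pickW_some _ h
    rw [h1, h2] at h
    simp only [pickW] at h
    split_ifs at h with hle <;> rw [Option.some_inj] at h
    · exact h ▸ meet_dir1_aux ha hb h1 h2 hle
    · have h3 := meet_dir1_aux hb ha h2 h1 (le_of_lt (by omega))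
      rw [h] at h3
      rw [← h3]
      apply pickB_comm
      intro a b hma hmb
      exact ⟨(ha.1 a w ((μa.consistent a w).2 hma)).2, (hb.1 b w ((μb.consistent b w).2 hmb)).2⟩
  · intro h
    rcases haw : μa.μw w with _ | m₁ <;> rcases hbw : μb.μw w with _ | m₂ <;>
      rw [haw, hbw] at h
    · exact absurd h (by simp [pickB])
    · -- w unmatched in μa, matched to m₂ = m in μb
      simp only [pickB, Option.some_inj] at h
      rw [h] at hbw
      have hbm : μb.μm m = some w := (μb.consistent m w).2 hbw
      obtain ⟨hwm, hmw⟩ := hb.1 m w hbm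
      cases ham : μa.μm m with
      | none =>
        exact absurd ⟨by rw [ham]; simp, by rw [ham]; exact hwm, by rw [haw]; exact hmw⟩
          (ha.2 m w)
      | some w₁ =>
        have hne : w₁ ≠ w := by
          rintro rfl; rw [(μa.consistent m w₁).1 ham] at haw; cases haw
        have hnm : ¬ J.mPref m w (some w₁) := by
          intro hc
          exact (ha.2 m w) ⟨by rw [ham]; intro hc2; exact hne (Option.some_inj.1 hc2),
            by rw [ham]; exact hc, by rw [haw]; exact hmw⟩
        have hw₁mem : w₁ ∈ J.mpref m := (ha.1 m w₁ ham).1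
        have hle : (J.mpref m).idxOf w₁ ≤ (J.mpref m).idxOf w := by
          by_contra hc
          exact hnm ⟨hwm, Or.inr (by omega)⟩
        rw [hbm]
        simp only [pickW]
        rw [if_pos hle]
    · -- w matched to m₁ = m in μa, unmatched in μb
      simp only [pickB, Option.some_inj] at h
      rw [h] at haw
      have ham : μa.μm m = some w := (μa.consistent m w).2 haw
      obtain ⟨hwm, hmw⟩ := ha.1 m w ham
      cases hbm : μb.μm m with
      | none =>
        exact absurd ⟨by rw [hbm]; simp, by rw [hbm]; exact hwm, by rw [hbw]; exact hmw⟩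
          (hb.2 m w)
      | some w₂ =>
        rcases eq_or_ne w₂ w with rfl | hne
        · rw [ham]; simp [pickW]
        · have hnm : ¬ J.mPref m w (some w₂) := by
            intro hc
            exact (hb.2 m w) ⟨by rw [hbm]; intro hc2; exact hne (Option.some_inj.1 hc2),
              by rw [hbm]; exact hc, by rw [hbw]; exact hmw⟩
          have hw₂mem : w₂ ∈ J.mpref m := (hb.1 m w₂ hbm).1
          have hlt : (J.mpref m).idxOf w₂ < (J.mpref m).idxOf w := by
            rcases not_or.1 (fun hc => hnm ⟨hwm, hc⟩) with ⟨h1, h2⟩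
            have h3 := idx_ne hw₂mem hwm hne
            omega
          rw [ham]
          simp only [pickW]
          rw [if_neg (by omega)]
    · -- both matched
      have hm₁ : μa.μm m₁ = some w := (μa.consistent m₁ w).2 haw
      have hm₂ : μb.μm m₂ = some w := (μb.consistent m₂ w).2 hbw
      have hm₁mem : m₁ ∈ J.wpref w := (ha.1 m₁ w hm₁).2
      have hm₂mem : m₂ ∈ J.wpref w := (hb.1 m₂ w hm₂).2
      simp only [pickB] at h
      split_ifs at h with hle <;> rw [Option.some_inj] at h
      · rw [h] at haw hm₁ hm₁mem hle
        rcases eq_or_ne m m₂ with rfl | hne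
        · rw [hm₁, hm₂]
          simp [pickW]
        · have hlt : (J.wpref w).idxOf m < (J.wpref w).idxOf m₂ :=
            lt_of_le_of_ne hle (idx_ne hm₁mem hm₂mem hne)
          obtain ⟨w', hw', hw'mem, hw'ne, hw'idx⟩ := pattern_w ha hb haw
            (by rw [hbw]; exact ⟨hm₁mem, Or.inr hlt⟩)
          rw [hm₁, hw']
          simp only [pickW]
          rw [if_neg (by omega)]
      · rw [h] at hbw hm₂ hm₂mem hle
        have hne : m ≠ m₁ := by
          rintro rfl; omega
        have hlt : (J.wpref w).idxOf m < (J.wpref w).idxOf m₁ := by omega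
        obtain ⟨w', hw', hw'mem, hw'ne, hw'idx⟩ := pattern_w hb ha hbw
          (by rw [haw]; exact ⟨hm₂mem, Or.inr hlt⟩)
        rw [hm₂, hw']
        simp only [pickW]
        rw [if_pos (by omega)]

/-- The meet of two stable matchings. -/
def meetMatching (J : SMInstance M W) (μa μb : Matching M W)
    (ha : IsStable J μa) (hb : IsStable J μb) : Matching M W where
  μm m := pickW (J.mpref m) (μa.μm m) (μb.μm m)
  μw w := pickB (J.wpref w) (μa.μw w) (μb.μw w)
  consistent := meet_consistent ha hb

theorem meetMatching_stable {J : SMInstance M W} {μa μb : Matching M W}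
    (ha : IsStable J μa) (hb : IsStable J μb) :
    IsStable J (meetMatching J μa μb ha hb) := by
  set σ := meetMatching J μa μb ha hb with hσ
  have hσm : ∀ m, σ.μm m = pickW (J.mpref m) (μa.μm m) (μb.μm m) := fun _ => rfl
  have hσw : ∀ w, σ.μw w = pickB (J.wpref w) (μa.μw w) (μb.μw w) := fun _ => rfl
  have hir : IndivRational J σ := by
    intro m w h
    rcases pickW_eq_or (J.mpref m) (μa.μm m) (μb.μm m) with he | he <;>
      rw [hσm m, he] at h
    · exact ha.1 m w h
    · exact hb.1 m w h
  refine ⟨hir, ?_⟩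
  rintro m w ⟨hne, hmp, hwp⟩
  have hwPa : J.wPref w m (μa.μw w) ∧ J.wPref w m (μb.μw w) := by
    cases hq : σ.μw w with
    | none =>
      obtain ⟨hna, hnb⟩ := pickB_eq_none (J.wpref w) (by rw [← hσw w]; exact hq)
      have hwp' := hwp; rw [hq] at hwp'
      have hmem : m ∈ J.wpref w := hwp'
      rw [hna, hnb]
      exact ⟨hmem, hmem⟩
    | some p =>
      have hp := hwp; rw [hq] at hp
      have hpw : σ.μm p = some w := (σ.consistent p w).2 hq
      have hpmem : p ∈ J.wpref w := (hir p w hpw).2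
      have hmlt : (J.wpref w).idxOf m < (J.wpref w).idxOf p := by
        rcases hp.2 with h | h
        · exact absurd hpmem h
        · exact h
      obtain ⟨-, hb1, hb2⟩ := pickB_some (J.wpref w) (by rw [← hσw w]; exact hq)
      constructor
      · cases hca : μa.μw w with
        | none => exact hp.1
        | some q => exact ⟨hp.1, Or.inr (lt_of_lt_of_le hmlt (hb1 q hca))⟩
      · cases hcb : μb.μw w with
        | none => exact hp.1
        | some q => exact ⟨hp.1, Or.inr (lt_of_lt_of_le hmlt (hb2 q hcb))⟩
  cases hpm : σ.μm m with
  | none =>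
    have hmp0 := hmp; rw [hpm] at hmp0
    have hwmem : w ∈ J.mpref m := hmp0
    rcases pickW_eq_none (J.mpref m) (by rw [← hσm m]; exact hpm) with hx | hx
    · exact ha.2 m w ⟨by rw [hx]; simp, by rw [hx]; exact hwmem, hwPa.1⟩
    · exact hb.2 m w ⟨by rw [hx]; simp, by rw [hx]; exact hwmem, hwPa.2⟩
  | some v =>
    have hmp' := hmp; rw [hpm] at hmp'
    have hvmem : v ∈ J.mpref m := (hir m v hpm).1
    have hlt : (J.mpref m).idxOf w < (J.mpref m).idxOf v := by
      rcases hmp'.2 with h | h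
      · exact absurd hvmem h
      · exact h
    have hwv : w ≠ v := by rintro rfl; omega
    rcases pickW_eq_or (J.mpref m) (μa.μm m) (μb.μm m) with he | he <;>
      rw [hσm m] at hpm
    · refine ha.2 m w ⟨?_, ?_, hwPa.1⟩
      · rw [← he, hpm]; intro hc; exact hwv (Option.some_inj.1 hc).symm
      · rw [← he, hpm]; exact hmp'
    · refine hb.2 m w ⟨?_, ?_, hwPa.2⟩
      · rw [← he, hpm]; intro hc; exact hwv (Option.some_inj.1 hc).symm
      · rw [← he, hpm]; exact hmp'

end MeetJoin
section Transfer

variable {M W : Type*} [DecidableEq M] [DecidableEq W]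

/-- The gender-flipped instance. -/
def SMInstance.flip (J : SMInstance M W) : SMInstance W M :=
  ⟨J.wpref, J.mpref, J.wnodup, J.mnodup⟩

/-- The gender-flipped matching. -/
def Matching.flip (μ : Matching M W) : Matching W M :=
  ⟨μ.μw, μ.μm, fun w m => (μ.consistent m w).symm⟩

theorem flip_mPref (J : SMInstance M W) (w : W) (m : M) (o : Option M) :
    J.flip.mPref w m o ↔ J.wPref w m o := by
  cases o <;> exact Iff.rfl

theorem flip_wPref (J : SMInstance M W) (m : M) (w : W) (o : Option W) :
    J.flip.wPref m w o ↔ J.mPref m w o := by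
  cases o <;> exact Iff.rfl

theorem flip_stable {J : SMInstance M W} {μ : Matching M W} (h : IsStable J μ) :
    IsStable J.flip μ.flip := by
  constructor
  · intro w m hm
    have h2 := h.1 m w ((μ.consistent m w).2 hm)
    exact ⟨h2.2, h2.1⟩
  · rintro w m ⟨hne, h1, h2⟩
    refine h.2 m w ⟨fun hc => hne ((μ.consistent m w).1 hc), ?_, ?_⟩
    · exact (flip_wPref J m w (μ.μm m)).1 h2
    · exact (flip_mPref J w m (μ.μw w)).1 h1

/-- Stability transfers to an instance with (women-side) truncated lists, provided
the matching is individually rational there. -/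
theorem stable_of_prefix {J' J : SMInstance M W} (hmp : J'.mpref = J.mpref)
    (hwp : ∀ w, J'.wpref w <+: J.wpref w) {μ : Matching M W} (hI : IsStable J μ)
    (hir : ∀ m w, μ.μm m = some w → m ∈ J'.wpref w) : IsStable J' μ := by
  constructor
  · intro m w h
    exact ⟨by rw [hmp]; exact (hI.1 m w h).1, hir m w h⟩
  · rintro m w ⟨hne, h1, h2⟩
    refine hI.2 m w ⟨hne, ?_, ?_⟩
    · cases hc : μ.μm m with
      | none =>
        rw [hc] at h1
        rw [mPref_none_iff] at h1 ⊢
        rw [hmp] at h1; exact h1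
      | some v =>
        rw [hc] at h1
        rw [mPref_some_iff] at h1 ⊢
        rw [hmp] at h1; exact h1
    · cases hc : μ.μw w with
      | none =>
        rw [hc] at h2
        exact (hwp w).subset h2
      | some p =>
        rw [hc] at h2
        have hpmem : p ∈ J'.wpref w := hir p w ((μ.consistent p w).2 hc)
        have hmmem : m ∈ J'.wpref w := h2.1
        have hlt : (J'.wpref w).idxOf m < (J'.wpref w).idxOf p := by
          rcases h2.2 with h | h
          · exact absurd hpmem h
          · exact h
        refine ⟨(hwp w).subset hmmem, Or.inr ?_⟩
        rw [idx_prefix (hwp w) hmmem, idx_prefix (hwp w) hpmem]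
        exact hlt

theorem mPref_trans {I : SMInstance M W} {m : M} {w₁ w₂ : W} {o : Option W}
    (h1 : I.mPref m w₁ (some w₂)) (h2 : I.mPref m w₂ o) : I.mPref m w₁ o := by
  cases o with
  | none => exact h1.1
  | some w₃ =>
    have hlt : (I.mpref m).idxOf w₁ < (I.mpref m).idxOf w₂ := by
      rcases h1.2 with h | h
      · exact absurd h2.1 h
      · exact h
    refine ⟨h1.1, ?_⟩
    rcases h2.2 with h | h
    · exact Or.inl h
    · exact Or.inr (lt_trans hlt h)

theorem mWeak_trans {I : SMInstance M W} {m : M} {o₁ o₂ o₃ : Option W}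
    (h1 : I.mWeak m o₁ o₂) (h2 : I.mWeak m o₂ o₃) : I.mWeak m o₁ o₃ := by
  rcases h1 with rfl | ⟨w₁, rfl, hp⟩
  · exact h2
  · rcases h2 with rfl | ⟨w₂, he, hp₂⟩
    · exact Or.inr ⟨w₁, rfl, hp⟩
    · rw [he] at hp
      exact Or.inr ⟨w₁, rfl, mPref_trans hp hp₂⟩

theorem mPref_congr {I I' : SMInstance M W} (h : I.mpref = I'.mpref) {m : M} {w : W}
    {o : Option W} : I.mPref m w o ↔ I'.mPref m w o := by
  cases o with
  | none => rw [mPref_none_iff, mPref_none_iff, h]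
  | some v => rw [mPref_some_iff, mPref_some_iff, h]

theorem mWeak_congr {I I' : SMInstance M W} (h : I.mpref = I'.mpref) {m : M}
    {o₁ o₂ : Option W} : I.mWeak m o₁ o₂ ↔ I'.mWeak m o₁ o₂ := by
  constructor <;> rintro (rfl | ⟨w, rfl, hp⟩)
  · exact Or.inl rfl
  · exact Or.inr ⟨w, rfl, (mPref_congr h).1 hp⟩
  · exact Or.inl rfl
  · exact Or.inr ⟨w, rfl, (mPref_congr h).2 hp⟩

theorem mWeak_pickB {I : SMInstance M W} {m : M} {o₁ o₂ : Option W}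
    (h₁ : ∀ a, o₁ = some a → a ∈ I.mpref m) (h₂ : ∀ a, o₂ = some a → a ∈ I.mpref m) :
    I.mWeak m (pickB (I.mpref m) o₁ o₂) o₁ ∧ I.mWeak m (pickB (I.mpref m) o₁ o₂) o₂ := by
  rcases o₁ with _ | a <;> rcases o₂ with _ | b
  · exact ⟨Or.inl rfl, Or.inl rfl⟩
  · exact ⟨Or.inr ⟨b, rfl, h₂ b rfl⟩, Or.inl rfl⟩
  · exact ⟨Or.inl rfl, Or.inr ⟨a, rfl, h₁ a rfl⟩⟩
  · simp only [pickB]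
    split_ifs with hle
    · rcases eq_or_ne a b with rfl | hne
      · exact ⟨Or.inl rfl, Or.inl rfl⟩
      · exact ⟨Or.inl rfl, Or.inr ⟨a, rfl,
          ⟨h₁ a rfl, Or.inr (lt_of_le_of_ne hle (idx_ne (h₁ a rfl) (h₂ b rfl) hne))⟩⟩⟩
    · exact ⟨Or.inr ⟨b, rfl, ⟨h₂ b rfl, Or.inr (by omega)⟩⟩, Or.inl rfl⟩

theorem wWeak_pickB {I : SMInstance M W} {w : W} {o₁ o₂ : Option M}
    (h₁ : ∀ a, o₁ = some a → a ∈ I.wpref w) (h₂ : ∀ a, o₂ = some a → a ∈ I.wpref w) :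
    I.wWeak w (pickB (I.wpref w) o₁ o₂) o₁ ∧ I.wWeak w (pickB (I.wpref w) o₁ o₂) o₂ := by
  rcases o₁ with _ | a <;> rcases o₂ with _ | b
  · exact ⟨Or.inl rfl, Or.inl rfl⟩
  · exact ⟨Or.inr ⟨b, rfl, h₂ b rfl⟩, Or.inl rfl⟩
  · exact ⟨Or.inl rfl, Or.inr ⟨a, rfl, h₁ a rfl⟩⟩
  · simp only [pickB]
    split_ifs with hle
    · rcases eq_or_ne a b with rfl | hne
      · exact ⟨Or.inl rfl, Or.inl rfl⟩
      · exact ⟨Or.inl rfl, Or.inr ⟨a, rfl,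
          ⟨h₁ a rfl, Or.inr (lt_of_le_of_ne hle (idx_ne (h₁ a rfl) (h₂ b rfl) hne))⟩⟩⟩
    · exact ⟨Or.inr ⟨b, rfl, ⟨h₂ b rfl, Or.inr (by omega)⟩⟩, Or.inl rfl⟩

end Transfer

/-- the women-meet of two matchings achievable by truncation
manipulations (keeping women-optimal partners, both stable under truth) is the
men-optimal stable matching of the profile of pointwise-shorter truncations. -/
theorem meet_achievable {M W : Type*} [DecidableEq M] [DecidableEq W]
    [Fintype M] [Fintype W] (I I₁ I₂ Icap : SMInstance M W) (L : Set W)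
    (μW μ₁ μ₂ : Matching M W) (hW : IsWomenOptimal I μW)
    (h1 : TruncManip I I₁ L) (h2 : TruncManip I I₂ L)
    (hk1 : ∀ w ∈ L, ∀ m, μW.μw w = some m → m ∈ I₁.wpref w)
    (hk2 : ∀ w ∈ L, ∀ m, μW.μw w = some m → m ∈ I₂.wpref w)
    (ho1 : IsMenOptimal I₁ μ₁) (ho2 : IsMenOptimal I₂ μ₂)
    (hs1 : IsStable I μ₁) (hs2 : IsStable I μ₂)
    (hcapM : Icap.mpref = I.mpref)
    (hcapN : ∀ w ∉ L, Icap.wpref w = I.wpref w)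
    (hcapL : ∀ w ∈ L, Icap.wpref w =
      if (I₁.wpref w).length ≤ (I₂.wpref w).length then I₁.wpref w else I₂.wpref w) :
    ∃ ν : Matching M W, IsMenOptimal Icap ν ∧
      ∀ w, (ν.μw w = μ₁.μw w ∨ ν.μw w = μ₂.μw w) ∧
        I.wWeak w (ν.μw w) (μ₁.μw w) ∧ I.wWeak w (ν.μw w) (μ₂.μw w) := by
  classical
  have h1m : I₁.mpref = I.mpref := h1.1.1
  have h2m : I₂.mpref = I.mpref := h2.1.1
  have h1w : ∀ w, I₁.wpref w <+: I.wpref w := by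
    intro w; by_cases hw : w ∈ L
    · exact h1.2 w hw
    · rw [h1.1.2 w hw]
  have h2w : ∀ w, I₂.wpref w <+: I.wpref w := by
    intro w; by_cases hw : w ∈ L
    · exact h2.2 w hw
    · rw [h2.1.2 w hw]
  have hcapw1 : ∀ w, Icap.wpref w <+: I₁.wpref w := by
    intro w; by_cases hw : w ∈ L
    · rw [hcapL w hw]; split_ifs with hlen
      · exact List.prefix_refl _
      · exact List.prefix_of_prefix_length_le (h2.2 w hw) (h1.2 w hw) (by omega)
    · rw [hcapN w hw, h1.1.2 w hw]
  have hcapw2 : ∀ w, Icap.wpref w <+: I₂.wpref w := by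
    intro w; by_cases hw : w ∈ L
    · rw [hcapL w hw]; split_ifs with hlen
      · exact List.prefix_of_prefix_length_le (h1.2 w hw) (h2.2 w hw) hlen
      · exact List.prefix_refl _
    · rw [hcapN w hw, h2.1.2 w hw]
  have hcapwI : ∀ w, Icap.wpref w <+: I.wpref w := fun w => (hcapw1 w).trans (h1w w)
  -- the meet ν of μ₁ and μ₂ under the true instance
  set ν : Matching M W := meetMatching I μ₁ μ₂ hs1 hs2 with hν
  have hνm : ∀ m, ν.μm m = pickW (I.mpref m) (μ₁.μm m) (μ₂.μm m) := fun _ => rfl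
  have hνw : ∀ w, ν.μw w = pickB (I.wpref w) (μ₁.μw w) (μ₂.μw w) := fun _ => rfl
  have hνI : IsStable I ν := meetMatching_stable hs1 hs2
  -- women-side individual rationality of ν w.r.t. Icap
  have hνirc : ∀ m w, ν.μm m = some w → m ∈ Icap.wpref w := by
    intro m w h
    have hq : ν.μw w = some m := (ν.consistent m w).1 h
    have hmI : m ∈ I.wpref w := (hνI.1 m w h).2
    by_cases hw : w ∈ L
    · rw [hcapL w hw]
      rw [hνw w] at hq
      split_ifs with hlen
      · cases ha : μ₁.μw w with
        | none =>
          rcases hb : μ₂.μw w with _ | m₂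
          · rw [ha, hb] at hq; exact absurd hq (by simp [pickB])
          · obtain ⟨m', hm'⟩ := rh_w hs2 hs1 hb
            rw [hm'] at ha; cases ha
        | some m₁ =>
          have hm₁mem : m₁ ∈ I₁.wpref w := (ho1.1.1 m₁ w ((μ₁.consistent m₁ w).2 ha)).2
          rcases eq_or_ne m m₁ with rfl | hne
          · exact hm₁mem
          · rw [ha] at hq
            obtain ⟨-, hlt⟩ := pickB_snd_lt _ hq hne
            exact mem_of_idx_lt (h1w w) hm₁mem hmI hlt
      · cases hb : μ₂.μw w with
        | none =>
          rcases ha : μ₁.μw w with _ | m₁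
          · rw [ha, hb] at hq; exact absurd hq (by simp [pickB])
          · obtain ⟨m', hm'⟩ := rh_w hs1 hs2 ha
            rw [hm'] at hb; cases hb
        | some m₂ =>
          have hm₂mem : m₂ ∈ I₂.wpref w := (ho2.1.1 m₂ w ((μ₂.consistent m₂ w).2 hb)).2
          rcases eq_or_ne m m₂ with rfl | hne
          · exact hm₂mem
          · rw [hb] at hq
            obtain ⟨-, hlt⟩ := pickB_fst_lt _ hq hne hmI ((h2w w).subset hm₂mem)
            exact mem_of_idx_lt (h2w w) hm₂mem hmI hlt
    · rw [hcapN w hw]; exact hmI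
  have hνcap : IsStable Icap ν := stable_of_prefix hcapM hcapwI hνI hνirc
  -- μW is stable under Icap
  have hWirc : ∀ m w, μW.μm m = some w → m ∈ Icap.wpref w := by
    intro m w h
    by_cases hw : w ∈ L
    · rw [hcapL w hw]; split_ifs
      · exact hk1 w hw m ((μW.consistent m w).1 h)
      · exact hk2 w hw m ((μW.consistent m w).1 h)
    · rw [hcapN w hw]; exact (hW.1.1 m w h).2
  have hWcap : IsStable Icap μW := stable_of_prefix hcapM hcapwI hW.1 hWirc
  refine ⟨ν, ⟨hνcap, ?_⟩, ?_⟩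
  · -- men-optimality of ν w.r.t. Icap
    intro μ' hμ' m0
    -- the join τ of μ' and ν within Icap
    set τ : Matching M W := (meetMatching Icap.flip μ'.flip ν.flip
      (flip_stable hμ') (flip_stable hνcap)).flip with hτ
    have hτm : ∀ m, τ.μm m = pickB (Icap.mpref m) (μ'.μm m) (ν.μm m) := fun _ => rfl
    have hτw : ∀ w, τ.μw w = pickW (Icap.wpref w) (μ'.μw w) (ν.μw w) := fun _ => rfl
    have hτcap : IsStable Icap τ :=
      flip_stable (meetMatching_stable (flip_stable hμ') (flip_stable hνcap))
    have hτIR : ∀ m w, τ.μm m = some w → m ∈ Icap.wpref w := fun m w h => (hτcap.1 m w h).2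
    -- τ is stable w.r.t. the true instance I
    have hτI : IsStable I τ := by
      constructor
      · intro m w h
        exact ⟨by rw [← hcapM]; exact (hτcap.1 m w h).1, (hcapwI w).subset ((hτcap.1 m w h).2)⟩
      · rintro m w ⟨hne, hmp, hwp⟩
        by_cases hmem : m ∈ Icap.wpref w
        · refine hτcap.2 m w ⟨hne, ?_, ?_⟩
          · cases hc : τ.μm m with
            | none =>
              rw [hc] at hmp
              rw [mPref_none_iff] at hmp ⊢
              rw [hcapM]; exact hmp
            | some v =>
              rw [hc] at hmp
              rw [mPref_some_iff] at hmp ⊢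
              rw [hcapM]; exact hmp
          · cases hc : τ.μw w with
            | none =>
              exact hmem
            | some p =>
              rw [hc] at hwp
              have hpcap : p ∈ Icap.wpref w := hτIR p w ((τ.consistent p w).2 hc)
              have hlt : (I.wpref w).idxOf m < (I.wpref w).idxOf p := by
                rcases hwp.2 with h | h
                · exact absurd ((hcapwI w).subset hpcap) h
                · exact h
              refine ⟨hmem, Or.inr ?_⟩
              rw [idx_prefix (hcapwI w) hmem, idx_prefix (hcapwI w) hpcap] at hlt
              exact hlt
        · have hmIw : m ∈ I.wpref w := wPref_mem hwp
          cases hc : τ.μw w with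
          | some p =>
            rw [hc] at hwp
            have hpcap : p ∈ Icap.wpref w := hτIR p w ((τ.consistent p w).2 hc)
            have hl1 : (I.wpref w).idxOf p < (I.wpref w).idxOf m :=
              idx_lt_of_not_mem (hcapwI w) hpcap hmem
            have hl2 : (I.wpref w).idxOf m < (I.wpref w).idxOf p := by
              rcases hwp.2 with h | h
              · exact absurd ((hcapwI w).subset hpcap) h
              · exact h
            omega
          | none =>
            -- w is unmatched in τ, hence in μW
            have hWw : μW.μw w = none := by
              cases hd : μW.μw w with
              | none => rfl
              | some mw =>
                obtain ⟨m', hm'⟩ := rh_w hWcap hτcap hd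
                rw [hm'] at hc; cases hc
            have hWnb := hW.1.2 m w
            have hWne : μW.μm m ≠ some w := by
              intro hcm; rw [(μW.consistent m w).1 hcm] at hWw; cases hWw
            have hwmem : w ∈ I.mpref m := mPref_mem hmp
            cases hW0 : μW.μm m with
            | none =>
              exact hWnb ⟨hWne, by rw [hW0]; exact hwmem, by rw [hWw]; exact hmIw⟩
            | some w₀ =>
              have hnmp : ¬ I.mPref m w (some w₀) := by
                intro hcp
                exact hWnb ⟨hWne, by rw [hW0]; exact hcp, by rw [hWw]; exact hmIw⟩
              have hw₀mem : w₀ ∈ I.mpref m := (hW.1.1 m w₀ hW0).1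
              have hw₀w : w₀ ≠ w := fun hh => hWne (hh ▸ hW0)
              have hidx₀ : (I.mpref m).idxOf w₀ < (I.mpref m).idxOf w := by
                rcases not_or.1 (fun hcc => hnmp ⟨hwmem, hcc⟩) with ⟨-, hcc⟩
                have := idx_ne hw₀mem hwmem hw₀w
                omega
              have hμWw₀ : μW.μw w₀ = some m := (μW.consistent m w₀).1 hW0
              have hmcap₀ : m ∈ Icap.wpref w₀ := hWirc m w₀ hW0
              have hτne : τ.μm m ≠ some w₀ ∧ Icap.mPref m w₀ (τ.μm m) := by
                cases he : τ.μm m with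
                | none =>
                  refine ⟨by simp, ?_⟩
                  rw [mPref_none_iff, hcapM]; exact hw₀mem
                | some wτ =>
                  have hwτmem : wτ ∈ I.mpref m := by
                    rw [← hcapM]; exact (hτcap.1 m wτ he).1
                  have hwlt : (I.mpref m).idxOf w < (I.mpref m).idxOf wτ := by
                    rw [he] at hmp
                    rcases hmp.2 with h | h
                    · exact absurd hwτmem h
                    · exact h
                  constructor
                  · intro hcc
                    rw [Option.some_inj] at hcc
                    subst hcc
                    omega
                  · rw [mPref_some_iff, hcapM]
                    exact ⟨hw₀mem, Or.inr (by omega)⟩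
              have hτnb := hτcap.2 m w₀
              cases hq₀ : τ.μw w₀ with
              | none =>
                exact hτnb ⟨hτne.1, hτne.2, by rw [hq₀]; exact hmcap₀⟩
              | some m₁ =>
                have hnwp : ¬ Icap.wPref w₀ m (some m₁) := by
                  intro hcp
                  exact hτnb ⟨hτne.1, hτne.2, by rw [hq₀]; exact hcp⟩
                have hm₁cap : m₁ ∈ Icap.wpref w₀ := hτIR m₁ w₀ ((τ.consistent m₁ w₀).2 hq₀)
                have hm₁m : m₁ ≠ m := by
                  rintro rfl
                  exact hτne.1 ((τ.consistent m₁ w₀).2 hq₀)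
                have hidx₁ : (Icap.wpref w₀).idxOf m₁ < (Icap.wpref w₀).idxOf m := by
                  rcases not_or.1 (fun hcc => hnwp ⟨hmcap₀, hcc⟩) with ⟨-, hcc⟩
                  have := idx_ne hm₁cap hmcap₀ hm₁m
                  omega
                have hq₀' : pickW (Icap.wpref w₀) (μ'.μw w₀) (ν.μw w₀) = some m₁ := by
                  rw [← hτw w₀]; exact hq₀
                obtain ⟨q, m₂, -, hνw₀, -, hm₂le⟩ := pickW_some _ hq₀'
                have hm₂cap : m₂ ∈ Icap.wpref w₀ := hνirc m₂ w₀ ((ν.consistent m₂ w₀).2 hνw₀)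
                have hm₂I : m₂ ∈ I.wpref w₀ := (hcapwI w₀).subset hm₂cap
                have hidxI : (I.wpref w₀).idxOf m₂ < (I.wpref w₀).idxOf m := by
                  rw [idx_prefix (hcapwI w₀) hm₂cap, idx_prefix (hcapwI w₀) hmcap₀]
                  omega
                have hcontra : ∀ μx : Matching M W, IsStable I μx →
                    μx.μw w₀ = some m₂ → False := by
                  intro μx hx hxw
                  have hwk := hW.2 μx hx w₀
                  rw [hμWw₀, hxw] at hwk
                  rcases hwk with he | ⟨p, hp, hpref⟩
                  · rw [Option.some_inj] at he; subst he; omega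
                  · rw [Option.some_inj] at hp; subst hp
                    rcases hpref.2 with h | h
                    · exact h hm₂I
                    · omega
                rw [hνw w₀] at hνw₀
                rcases pickB_eq_or (I.wpref w₀) (μ₁.μw w₀) (μ₂.μw w₀) with he | he <;>
                  rw [he] at hνw₀
                · exact hcontra μ₁ hs1 hνw₀
                · exact hcontra μ₂ hs2 hνw₀
    -- τ is stable under I₁ and I₂
    have hτ1 : IsStable I₁ τ :=
      stable_of_prefix h1m h1w hτI (fun m w h => (hcapw1 w).subset (hτIR m w h))
    have hτ2 : IsStable I₂ τ :=
      stable_of_prefix h2m h2w hτI (fun m w h => (hcapw2 w).subset (hτIR m w h))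
    have hW1 : Icap.mWeak m0 (μ₁.μm m0) (τ.μm m0) :=
      (mWeak_congr (by rw [h1m, hcapM])).1 (ho1.2 τ hτ1 m0)
    have hW2 : Icap.mWeak m0 (μ₂.μm m0) (τ.μm m0) :=
      (mWeak_congr (by rw [h2m, hcapM])).1 (ho2.2 τ hτ2 m0)
    have hW3 : Icap.mWeak m0 (τ.μm m0) (μ'.μm m0) := by
      rw [hτm m0]
      exact (mWeak_pickB (fun a ha => (hμ'.1 m0 a ha).1)
        (fun a ha => (hνcap.1 m0 a ha).1)).1
    have hW4 : Icap.mWeak m0 (ν.μm m0) (τ.μm m0) := by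
      rcases pickW_eq_or (I.mpref m0) (μ₁.μm m0) (μ₂.μm m0) with he | he <;>
        rw [hνm m0, he]
      · exact hW1
      · exact hW2
    exact mWeak_trans hW4 hW3
  · -- the conclusions about the women
    intro w
    have mem1 : ∀ a, μ₁.μw w = some a → a ∈ I.wpref w :=
      fun a ha => (hs1.1 a w ((μ₁.consistent a w).2 ha)).2
    have mem2 : ∀ a, μ₂.μw w = some a → a ∈ I.wpref w :=
      fun a ha => (hs2.1 a w ((μ₂.consistent a w).2 ha)).2
    refine ⟨?_, ?_, ?_⟩
    · rw [hνw w]; exact pickB_eq_or _ _ _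
    · rw [hνw w]; exact (wWeak_pickB mem1 mem2).1
    · rw [hνw w]; exact (wWeak_pickB mem1 mem2).2
end

section
/- During the elimination of an exposed rotation R = ((m₁,...,m_r),(w₁,...,w_r)) in the men-proposing deferred acceptance process, for each man m_i, the woman w_{i+1} (indices mod r) is the first woman to accept his new proposal, and each woman in R accepts exactly one new proposal during the elimination. -/
open List

lemma nodup_pairwise_indexOf {α : Type*} [DecidableEq α] {L : List α} (h : L.Nodup) :
    L.Pairwise (fun a b => L.idxOf a < L.idxOf b) := by
  induction L with
  | nil => simp
  | cons x t ih =>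
    rw [List.nodup_cons] at h
    refine List.pairwise_cons.mpr ⟨?_, (ih h.2).imp_of_mem ?_⟩
    · intro b hb
      rw [List.idxOf_cons_self, List.idxOf_cons_ne _ (ne_of_mem_of_not_mem hb h.1).symm]
      exact Nat.succ_pos _
    · intro a b ha hb hr
      rw [List.idxOf_cons_ne _ (ne_of_mem_of_not_mem ha h.1).symm,
          List.idxOf_cons_ne _ (ne_of_mem_of_not_mem hb h.1).symm]
      omega

lemma sublist_indexOf_lt {α : Type*} [DecidableEq α] {l L : List α} (hs : l <+ L) (hn : L.Nodup)
    {i j : Fin l.length} (hij : i < j) : L.idxOf (l.get i) < L.idxOf (l.get j) :=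
  (List.pairwise_iff_get.mp (List.Pairwise.sublist hs (nodup_pairwise_indexOf hn))) i j hij

lemma mem_getLast_indexOf {α : Type*} [DecidableEq α] {l L : List α} (hs : l <+ L) (hn : L.Nodup)
    {a b : α} (ha : a ∈ l) (hb : l.getLast? = some b) (hne : a ≠ b) :
    L.idxOf a < L.idxOf b := by
  rw [List.getLast?_eq_getElem?, List.getElem?_eq_some_iff] at hb
  obtain ⟨hlt, hgb⟩ := hb
  have hia : l.idxOf a < l.length := List.idxOf_lt_length_iff.mpr ha
  have hga : l.get ⟨l.idxOf a, hia⟩ = a := List.idxOf_get hia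
  have hlt' : l.idxOf a < l.length - 1 := by
    rcases Nat.lt_or_ge (l.idxOf a) (l.length - 1) with h | h
    · exact h
    · exfalso; apply hne
      have : l.idxOf a = l.length - 1 := by omega
      rw [← hga, ← hgb]; simp [this]
  have := sublist_indexOf_lt hs hn (i := ⟨l.idxOf a, hia⟩) (j := ⟨l.length - 1, hlt⟩) hlt'
  simpa [hga, List.get_eq_getElem, hgb] using this

lemma second_indexOf_lt {α : Type*} [DecidableEq α] {l L : List α} (hs : l <+ L) (hn : L.Nodup)
    {a b c : α} (h0 : l.head? = some a) (h1 : l[1]? = some b) (hc : c ∈ l)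
    (hca : c ≠ a) (hcb : c ≠ b) : L.idxOf b < L.idxOf c := by
  rw [List.getElem?_eq_some_iff] at h1
  obtain ⟨h1lt, h1b⟩ := h1
  have h0' : l[0]? = some a := by rwa [← List.head?_eq_getElem?]
  rw [List.getElem?_eq_some_iff] at h0'
  obtain ⟨h0lt, h0a⟩ := h0'
  have hic : l.idxOf c < l.length := List.idxOf_lt_length_iff.mpr hc
  have hgc : l.get ⟨l.idxOf c, hic⟩ = c := List.idxOf_get hic
  have hne0 : l.idxOf c ≠ 0 := by
    intro h; apply hca; rw [← hgc, ← h0a]; simp [h]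
  have hne1 : l.idxOf c ≠ 1 := by
    intro h; apply hcb; rw [← hgc, ← h1b]; simp [h]
  have := sublist_indexOf_lt hs hn (i := ⟨1, h1lt⟩) (j := ⟨l.idxOf c, hic⟩) (by simp; omega)
  simpa [hgc, List.get_eq_getElem, h1b] using this

lemma succ_mod_inj {r a b : ℕ} (ha : a < r) (hb : b < r)
    (h : (a+1) % r = (b+1) % r) : a = b := by
  rcases Nat.lt_or_ge (a+1) r with h1|h1 <;> rcases Nat.lt_or_ge (b+1) r with h2|h2
  · rw [Nat.mod_eq_of_lt h1, Nat.mod_eq_of_lt h2] at h; omega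
  · have hb1 : b + 1 = r := by omega
    rw [Nat.mod_eq_of_lt h1, hb1, Nat.mod_self] at h; omega
  · have ha1 : a + 1 = r := by omega
    rw [ha1, Nat.mod_self, Nat.mod_eq_of_lt h2] at h; omega
  · omega

lemma succ_mod_ne {r a : ℕ} (hr : 2 ≤ r) (ha : a < r) : (a+1) % r ≠ a := by
  rcases Nat.lt_or_ge (a+1) r with h1|h1
  · rw [Nat.mod_eq_of_lt h1]; omega
  · have : a + 1 = r := by omega
    rw [this, Nat.mod_self]; omega



/-- during the elimination of an exposed rotation, `w_{i+1}` is the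
first woman to accept `m_i`'s new proposals (every woman strictly between `w_i`
and `w_{i+1}` on his list rejects him, and `w_{i+1}` accepts him), and each woman
of the rotation accepts exactly one new proposal. -/
theorem rotation_first_acceptance {M W : Type*} [DecidableEq M] [DecidableEq W]
    [Fintype M] [Fintype W] (I : SMInstance M W) (T : ReducedTable I) (R : Rot M W)
    (hexp : ∀ i, (T.rm (R.ms i)).head? = some (R.ws i) ∧
                 (T.rm (R.ms i))[1]? = some (R.ws (R.nxt i))) :
    -- (a) `w_{i+1}` accepts `m_i`: she prefers him to her current partner `m_{i+1}`
    (∀ i, R.ms i ∈ I.wpref (R.ws (R.nxt i)) ∧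
      (I.wpref (R.ws (R.nxt i))).idxOf (R.ms i) <
        (I.wpref (R.ws (R.nxt i))).idxOf (R.ms (R.nxt i))) ∧
    -- (b) every woman strictly between `w_i` and `w_{i+1}` on `m_i`'s true list
    -- rejects him: she prefers her current partner
    (∀ i, ∀ w', w' ∈ I.mpref (R.ms i) →
      (I.mpref (R.ms i)).idxOf (R.ws i) < (I.mpref (R.ms i)).idxOf w' →
      (I.mpref (R.ms i)).idxOf w' < (I.mpref (R.ms i)).idxOf (R.ws (R.nxt i)) →
      R.ms i ∈ I.wpref w' →
      ∀ p, (T.rw w').getLast? = some p →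
        (I.wpref w').idxOf p < (I.wpref w').idxOf (R.ms i)) ∧
    -- (c) each woman `w_{i+1}` of the rotation accepts only the proposal of `m_i`
    (∀ i j,
      (I.mpref (R.ms j)).idxOf (R.ws j) < (I.mpref (R.ms j)).idxOf (R.ws (R.nxt i)) →
      (I.mpref (R.ms j)).idxOf (R.ws (R.nxt i)) ≤
        (I.mpref (R.ms j)).idxOf (R.ws (R.nxt j)) →
      R.ws (R.nxt i) ∈ I.mpref (R.ms j) → R.ms j ∈ I.wpref (R.ws (R.nxt i)) →
      (I.wpref (R.ws (R.nxt i))).idxOf (R.ms j) <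
        (I.wpref (R.ws (R.nxt i))).idxOf (R.ms (R.nxt i)) →
      j = i) := by
  -- basic facts
  have hnxt_ne : ∀ i : Fin R.r, R.nxt i ≠ i := by
    intro i h
    exact succ_mod_ne R.hr i.isLt (congrArg Fin.val h)
  have hnxt_inj : ∀ i j : Fin R.r, R.nxt i = R.nxt j → i = j := by
    intro i j h
    exact Fin.ext (succ_mod_inj i.isLt j.isLt (congrArg Fin.val h))
  -- second woman is on the reduced list
  have hmem2 : ∀ i, R.ws (R.nxt i) ∈ T.rm (R.ms i) := by
    intro i
    obtain ⟨hlt, hg⟩ := List.getElem?_eq_some_iff.mp (hexp i).2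
    exact hg ▸ List.getElem_mem hlt
  -- each woman's reduced list ends with her current partner
  have hlast : ∀ i, (T.rw (R.ws i)).getLast? = some (R.ms i) := by
    intro i
    exact (T.engaged (R.ms i) (R.ws i)).mp (hexp i).1
  -- no woman strictly between ws i and ws (nxt i) is on rm (ms i)
  have hnotmem : ∀ i w', w' ∈ I.mpref (R.ms i) →
      (I.mpref (R.ms i)).idxOf (R.ws i) < (I.mpref (R.ms i)).idxOf w' →
      (I.mpref (R.ms i)).idxOf w' < (I.mpref (R.ms i)).idxOf (R.ws (R.nxt i)) →
      w' ∉ T.rm (R.ms i) := by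
    intro i w' _ hlt1 hlt2 hin
    have hca : w' ≠ R.ws i := by intro h; rw [h] at hlt1; omega
    have hcb : w' ≠ R.ws (R.nxt i) := by intro h; rw [h] at hlt2; omega
    have := second_indexOf_lt (T.rmSub (R.ms i)) (I.mnodup (R.ms i))
      (hexp i).1 (hexp i).2 hin hca hcb
    omega
  refine ⟨?_, ?_, ?_⟩
  · -- (a)
    intro i
    have hm : R.ms i ∈ T.rw (R.ws (R.nxt i)) := (T.mem_iff _ _).mp (hmem2 i)
    have hne : R.ms i ≠ R.ms (R.nxt i) := fun h => hnxt_ne i (R.inj h).symm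
    exact ⟨(T.rwSub _).subset hm,
      mem_getLast_indexOf (T.rwSub _) (I.wnodup _) hm (hlast (R.nxt i)) hne⟩
  · -- (b)
    intro i w' hmem hlt1 hlt2 hw' p hp
    have hnot : R.ms i ∉ T.rw w' := fun h =>
      hnotmem i w' hmem hlt1 hlt2 ((T.mem_iff _ _).mpr h)
    exact T.removed_worse (R.ms i) w' p hw' hnot hp
  · -- (c)
    intro i j h1 h2 hmemM hmemW hidx
    by_contra hji
    by_cases heq : R.ws (R.nxt i) = R.ws (R.nxt j)
    · have e1 := hlast (R.nxt i)
      have e2 := hlast (R.nxt j)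
      rw [heq] at e1
      rw [e2] at e1
      exact hji (hnxt_inj j i (R.inj (Option.some_injective _ e1)))
    · have hmem' : R.ws (R.nxt j) ∈ I.mpref (R.ms j) :=
        (T.rmSub _).subset (hmem2 j)
      have h2' : (I.mpref (R.ms j)).idxOf (R.ws (R.nxt i)) <
          (I.mpref (R.ms j)).idxOf (R.ws (R.nxt j)) :=
        lt_of_le_of_ne h2 (fun he => heq ((List.idxOf_inj hmemM (y := R.ws (R.nxt j))) |>.mp he))
      have hnot : R.ms j ∉ T.rw (R.ws (R.nxt i)) := fun h =>
        hnotmem j (R.ws (R.nxt i)) hmemM h1 h2' ((T.mem_iff _ _).mpr h)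
      have := T.removed_worse (R.ms j) (R.ws (R.nxt i)) (R.ms (R.nxt i))
        hmemW hnot (hlast (R.nxt i))
      omega
end

section
/- After eliminating a single rotation R and updating the suitor graph accordingly, all agents (men and women) appearing in R lie in the same strongly connected component of the suitor graph. -/
open List

private lemma pair_sublist_idxOf_lt {α : Type*} [DecidableEq α] {a b : α} :
    ∀ {l : List α}, [a, b] <+ l → l.Nodup → l.idxOf a < l.idxOf b := by
  intro l
  induction l with
  | nil => intro h _; exact absurd (List.sublist_nil.1 h) (by simp)
  | cons c t ih =>
    intro h hn
    have hc : c ∉ t := (List.nodup_cons.1 hn).1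
    have ht : t.Nodup := (List.nodup_cons.1 hn).2
    cases h with
    | cons _ h' =>
      have ha : a ∈ t := h'.subset (by simp)
      have hb : b ∈ t := h'.subset (by simp)
      rw [List.idxOf_cons_ne t (by rintro rfl; exact hc ha),
        List.idxOf_cons_ne t (by rintro rfl; exact hc hb)]
      exact Nat.succ_lt_succ (ih h' ht)
    | cons_cons _ h' =>
      have hb : b ∈ t := h'.subset (by simp)
      rw [List.idxOf_cons_self, List.idxOf_cons_ne t (by rintro rfl; exact hc hb)]
      exact Nat.succ_pos _

private lemma head_second {α : Type*} {l : List α} {a b : α}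
    (h1 : l.head? = some a) (h2 : l[1]? = some b) : ∃ t, l = a :: b :: t := by
  cases l with
  | nil => simp at h1
  | cons x t =>
    cases t with
    | nil => simp at h2
    | cons y t' =>
      simp only [List.head?_cons, Option.some.injEq] at h1
      simp only [List.getElem?_cons_succ, List.getElem?_cons_zero, Option.some.injEq] at h2
      exact ⟨t', by rw [h1, h2]⟩

/-- after eliminating a single rotation and updating the suitor
graph, all agents of the rotation lie in the same strongly connected component. -/
theorem rotation_same_scc {M W : Type*} [DecidableEq M] [DecidableEq W]
    [Fintype M] [Fintype W] (I : SMInstance M W) (L : Set W) (T : ReducedTable I)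
    (R : Rot M W) (μ μ' : Matching M W)
    (hμ : ∀ m, μ.μm m = (T.rm m).head?)
    (hstable : IsStable I μ)
    (hexp : ∀ i, (T.rm (R.ms i)).head? = some (R.ws i) ∧
                 (T.rm (R.ms i))[1]? = some (R.ws (R.nxt i)))
    (helim : ElimStep R μ μ') :
    ∀ i j,
      SReach I L μ' (Sum.inl (R.ms i)) (Sum.inl (R.ms j)) ∧
      SReach I L μ' (Sum.inl (R.ms i)) (Sum.inr (Sum.inl (R.ws j))) ∧
      SReach I L μ' (Sum.inr (Sum.inl (R.ws i))) (Sum.inl (R.ms j)) ∧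
      SReach I L μ' (Sum.inr (Sum.inl (R.ws i))) (Sum.inr (Sum.inl (R.ws j))) := by
  classical
  have hr0 : 0 < R.r := by have := R.hr; omega
  -- basic matching facts
  have hμm : ∀ i, μ.μm (R.ms i) = some (R.ws i) := fun i => (hμ _).trans (hexp i).1
  have hμw : ∀ i, μ.μw (R.ws i) = some (R.ms i) := fun i => (μ.consistent _ _).1 (hμm i)
  have wsInj : Function.Injective R.ws := by
    intro i j h
    apply R.inj
    have h1 := hμw i
    rw [h] at h1
    rw [hμw j] at h1
    exact Option.some.inj h1.symm
  have hμ'm : ∀ i, μ'.μm (R.ms i) = some (R.ws (R.nxt i)) := helim.1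
  have hμ'w : ∀ i, μ'.μw (R.ws (R.nxt i)) = some (R.ms i) :=
    fun i => (μ'.consistent _ _).1 (hμ'm i)
  -- structure of reduced lists
  have hrm : ∀ i, ∃ t, T.rm (R.ms i) = R.ws i :: R.ws (R.nxt i) :: t :=
    fun i => head_second (hexp i).1 (hexp i).2
  have hws_mem : ∀ i, R.ws i ∈ I.mpref (R.ms i) := by
    intro i
    obtain ⟨t, ht⟩ := hrm i
    exact (T.rmSub (R.ms i)).subset (ht ▸ (by simp))
  have hws1_mem : ∀ i, R.ws (R.nxt i) ∈ I.mpref (R.ms i) := by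
    intro i
    obtain ⟨t, ht⟩ := hrm i
    exact (T.rmSub (R.ms i)).subset (ht ▸ (by simp))
  have hms_mem : ∀ i, R.ms i ∈ I.wpref (R.ws i) := by
    intro i
    obtain ⟨t, ht⟩ := hrm i
    exact (T.rwSub (R.ws i)).subset ((T.mem_iff _ _).1 (ht ▸ (by simp)))
  have hlast : ∀ i, (T.rw (R.ws i)).getLast? = some (R.ms i) :=
    fun i => (T.engaged _ _).1 (hexp i).1
  -- m_i is a suitor of w_i at μ'
  have hidx01 : ∀ i, (I.mpref (R.ms i)).idxOf (R.ws i) <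
      (I.mpref (R.ms i)).idxOf (R.ws (R.nxt i)) := by
    intro i
    obtain ⟨t, ht⟩ := hrm i
    refine pair_sublist_idxOf_lt (List.Sublist.trans ?_ (T.rmSub (R.ms i))) (I.mnodup _)
    rw [ht]
    exact (List.nil_sublist t).cons₂ _ |>.cons₂ _
  have hsuit : ∀ i, R.ms i ∈ suitorSet I μ' (R.ws i) := by
    intro i
    show I.mPref (R.ms i) (R.ws i) (μ'.μm (R.ms i))
    rw [hμ'm i]
    exact ⟨hws_mem i, Or.inr (hidx01 i)⟩
  -- m_i is w_i's favourite suitor at μ'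
  have hbest : ∀ i, ∀ m' ∈ suitorSet I μ' (R.ws i), m' ≠ R.ms i →
      (I.wpref (R.ws i)).idxOf (R.ms i) < (I.wpref (R.ws i)).idxOf m' := by
    intro i m' hm' hne
    by_cases hmem : m' ∈ I.wpref (R.ws i)
    · have hm'' : I.mPref m' (R.ws i) (μ'.μm m') := hm'
      by_cases hrot : ∃ j, m' = R.ms j
      · obtain ⟨j, rfl⟩ := hrot
        have hij : j ≠ i := fun e => hne (congrArg R.ms e)
        rw [hμ'm j] at hm''
        obtain ⟨hwim, hcase⟩ := hm''
        have hlt1 : (I.mpref (R.ms j)).idxOf (R.ws i) <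
            (I.mpref (R.ms j)).idxOf (R.ws (R.nxt j)) := by
          rcases hcase with h | h
          · exact absurd (hws1_mem j) h
          · exact h
        by_cases hlt2 : (I.mpref (R.ms j)).idxOf (R.ws i) <
            (I.mpref (R.ms j)).idxOf (R.ws j)
        · -- (m_j, w_i) would be a blocking pair at μ otherwise
          have hnb := hstable.2 (R.ms j) (R.ws i)
          have hnw : ¬ I.wPref (R.ws i) (R.ms j) (μ.μw (R.ws i)) := by
            intro hC
            apply hnb
            refine ⟨?_, ?_, hC⟩
            · rw [hμm j]
              intro e
              exact hij (wsInj (Option.some.inj e))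
            · rw [hμm j]
              exact ⟨hwim, Or.inr hlt2⟩
          rw [hμw i] at hnw
          have hle : (I.wpref (R.ws i)).idxOf (R.ms i) ≤
              (I.wpref (R.ws i)).idxOf (R.ms j) := by
            by_contra hcon
            exact hnw ⟨hmem, Or.inr (by omega)⟩
          refine lt_of_le_of_ne hle ?_
          intro e
          exact hne ((List.idxOf_inj hmem).1 e.symm)
        · -- w_i has been removed from m_j's reduced list
          obtain ⟨t, ht⟩ := hrm j
          have hnin : R.ws i ∉ T.rm (R.ms j) := by
            intro hin
            rw [ht, List.mem_cons, List.mem_cons] at hin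
            rcases hin with h | h | h
            · exact hij (wsInj h.symm)
            · rw [h] at hlt1; omega
            · have : (I.mpref (R.ms j)).idxOf (R.ws (R.nxt j)) <
                  (I.mpref (R.ms j)).idxOf (R.ws i) := by
                refine pair_sublist_idxOf_lt
                  (List.Sublist.trans ?_ (T.rmSub (R.ms j))) (I.mnodup _)
                rw [ht]
                exact (((List.singleton_sublist.2 h).cons₂ _).cons _)
              omega
          have hnrw : R.ms j ∉ T.rw (R.ws i) := fun h => hnin ((T.mem_iff _ _).2 h)
          exact T.removed_worse (R.ms j) (R.ws i) (R.ms i) hmem hnrw (hlast i)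
      · -- m' is outside the rotation: same suitor at μ, use stability
        push_neg at hrot
        rw [helim.2 m' hrot] at hm''
        have hnb := hstable.2 m' (R.ws i)
        have hnw : ¬ I.wPref (R.ws i) m' (μ.μw (R.ws i)) := by
          intro hC
          apply hnb
          refine ⟨?_, hm'', hC⟩
          intro e
          have := (μ.consistent _ _).1 e
          rw [hμw i] at this
          exact hne (Option.some.inj this.symm)
        rw [hμw i] at hnw
        have hle : (I.wpref (R.ws i)).idxOf (R.ms i) ≤
            (I.wpref (R.ws i)).idxOf m' := by
          by_contra hcon
          exact hnw ⟨hmem, Or.inr (by omega)⟩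
        refine lt_of_le_of_ne hle ?_
        intro e
        exact hne ((List.idxOf_inj hmem).1 e.symm)
    · have h1 : (I.wpref (R.ws i)).idxOf m' = (I.wpref (R.ws i)).length :=
        List.idxOf_eq_length_iff.2 hmem
      rw [h1]
      exact List.idxOf_lt_length_iff.2 (hms_mem i)
  -- edges of the suitor graph at μ'
  have E1 : ∀ i, SuitorEdge I L μ' (Sum.inl (R.ms i)) (Sum.inr (Sum.inl (R.ws i))) := by
    intro i
    by_cases hL : R.ws i ∈ L
    · exact SuitorEdge.suitor_manip _ _ hL (hsuit i)
    · exact SuitorEdge.suitor_honest _ _ hL (hsuit i) (fun m' h1 h2 => hbest i m' h1 h2)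
  have E2 : ∀ i, SuitorEdge I L μ' (Sum.inr (Sum.inl (R.ws (R.nxt i)))) (Sum.inl (R.ms i)) :=
    fun i => SuitorEdge.partner_wm _ _ (hμ'w i)
  -- one backward step along the cycle
  have step : ∀ i, SReach I L μ' (Sum.inl (R.ms (R.nxt i))) (Sum.inl (R.ms i)) :=
    fun i => (Relation.ReflTransGen.single (E1 (R.nxt i))).tail (E2 i)
  -- iterate: m_{i+k} reaches m_i
  have key : ∀ (k : ℕ) (i : Fin R.r),
      SReach I L μ' (Sum.inl (R.ms ⟨(i.val + k) % R.r, Nat.mod_lt _ hr0⟩)) (Sum.inl (R.ms i)) := by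
    intro k
    induction k with
    | zero =>
      intro i
      have he : (⟨(i.val + 0) % R.r, Nat.mod_lt _ hr0⟩ : Fin R.r) = i :=
        Fin.ext (by simp [Nat.mod_eq_of_lt i.isLt])
      rw [he]
    | succ k ih =>
      intro i
      have hnx : R.nxt ⟨(i.val + k) % R.r, Nat.mod_lt _ hr0⟩ =
          ⟨(i.val + (k + 1)) % R.r, Nat.mod_lt _ hr0⟩ := by
        apply Fin.ext
        show ((i.val + k) % R.r + 1) % R.r = (i.val + (k + 1)) % R.r
        rw [Nat.mod_add_mod, Nat.add_assoc]
      have hs := step ⟨(i.val + k) % R.r, Nat.mod_lt _ hr0⟩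
      rw [hnx] at hs
      exact hs.trans (ih i)
  have mm : ∀ i j, SReach I L μ' (Sum.inl (R.ms i)) (Sum.inl (R.ms j)) := by
    intro i j
    have h := key (i.val + R.r - j.val) j
    have he : (⟨(j.val + (i.val + R.r - j.val)) % R.r, Nat.mod_lt _ hr0⟩ : Fin R.r) = i := by
      apply Fin.ext
      show (j.val + (i.val + R.r - j.val)) % R.r = i.val
      have h1 : j.val + (i.val + R.r - j.val) = i.val + R.r := by
        have := j.isLt; omega
      rw [h1, Nat.add_mod_right, Nat.mod_eq_of_lt i.isLt]
    rw [he] at h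
    exact h
  have wm : ∀ i j, SReach I L μ' (Sum.inr (Sum.inl (R.ws i))) (Sum.inl (R.ms j)) := by
    intro i j
    set p : Fin R.r := ⟨(i.val + R.r - 1) % R.r, Nat.mod_lt _ hr0⟩ with hp
    have hnp : R.nxt p = i := by
      apply Fin.ext
      show ((i.val + R.r - 1) % R.r + 1) % R.r = i.val
      rw [Nat.mod_add_mod]
      have h1 : i.val + R.r - 1 + 1 = i.val + R.r := by omega
      rw [h1, Nat.add_mod_right, Nat.mod_eq_of_lt i.isLt]
    have e := E2 p
    rw [hnp] at e
    exact (Relation.ReflTransGen.single e).trans (mm p j)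
  intro i j
  exact ⟨mm i j, (mm i j).tail (E1 j), wm i j, (wm i j).tail (E1 j)⟩
end
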